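/- Let X, Y, and X+Y be integrable random variables each satisfying P(W ≤ Q_α(W)) = α for W ∈ {X, Y, X+Y}, α ∈ (0,1). Then E[X + Y | X+Y ≤ Q_α(X+Y)] ≥ E[X | X ≤ Q_α(X)] + E[Y | Y ≤ Q_α(Y)]. -/

import Mathlib

open MeasureTheory

/-- Conditional expectation of a random variable given an event. -/
noncomputable def condExpEvent {Ω : Type*} [MeasurableSpace Ω] (μ : Measure Ω)
    (Y : Ω → ℝ) (A : Set Ω) : ℝ :=
  (∫ ω in A, Y ω ∂μ) / (μ A).toReal

/-- The α-quantile `Q_α(X) = inf {x | P(X ≤ x) ≥ α}`. -/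
noncomputable def quantile {Ω : Type*} [MeasurableSpace Ω] (μ : Measure Ω)
    (α : ℝ) (X : Ω → ℝ) : ℝ :=
  sInf {x : ℝ | α ≤ (μ {ω | X ω ≤ x}).toReal}

/-- Key lemma: if `μ F = μ {X ≤ q}`, then `∫_{X ≤ q} X ≤ ∫_F X`. -/
lemma key_lemma {Ω : Type*} [MeasurableSpace Ω] (μ : Measure Ω) [IsProbabilityMeasure μ]
    (X : Ω → ℝ) (hXm : Measurable X) (hXint : Integrable X μ) (q : ℝ)
    (F : Set Ω) (hF : MeasurableSet F) (hμ : μ F = μ {ω | X ω ≤ q}) :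
    ∫ ω in {ω | X ω ≤ q}, X ω ∂μ ≤ ∫ ω in F, X ω ∂μ := by
  set A : Set Ω := {ω | X ω ≤ q} with hAdef
  have hAm : MeasurableSet A := measurableSet_le hXm measurable_const
  have hdiff : μ (A \ F) = μ (F \ A) := by
    have h1 : μ (A \ F) + μ (A ∩ F) = μ A := measure_diff_add_inter A hF
    have h2 : μ (F \ A) + μ (F ∩ A) = μ F := measure_diff_add_inter F hAm
    rw [Set.inter_comm] at h2
    rw [hμ, ← h1] at h2
    exact (WithTop.add_right_cancel (measure_ne_top μ _) h2).symm
  have hintA : IntegrableOn X (A \ F) μ := hXint.integrableOn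
  have hintF : IntegrableOn X (F \ A) μ := hXint.integrableOn
  have h2 : ∫ ω in A \ F, X ω ∂μ ≤ q * (μ (A \ F)).toReal := by
    have : ∫ ω in A \ F, X ω ∂μ ≤ ∫ _ω in A \ F, q ∂μ := by
      apply setIntegral_mono_on hintA (integrableOn_const (measure_ne_top μ _))
        (hAm.diff hF)
      intro ω hω; exact hω.1
    simpa [setIntegral_const, smul_eq_mul, mul_comm, Measure.real] using this
  have h3 : q * (μ (F \ A)).toReal ≤ ∫ ω in F \ A, X ω ∂μ := by
    have : ∫ _ω in F \ A, q ∂μ ≤ ∫ ω in F \ A, X ω ∂μ := by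
      apply setIntegral_mono_on (integrableOn_const (measure_ne_top μ _)) hintF
        (hF.diff hAm)
      intro ω hω
      exact le_of_lt (lt_of_not_ge hω.2)
    simpa [setIntegral_const, smul_eq_mul, mul_comm, Measure.real] using this
  have hsplitA : ∫ ω in A ∩ F, X ω ∂μ + ∫ ω in A \ F, X ω ∂μ = ∫ ω in A, X ω ∂μ :=
    integral_inter_add_diff hF hXint.integrableOn
  have hsplitF : ∫ ω in F ∩ A, X ω ∂μ + ∫ ω in F \ A, X ω ∂μ = ∫ ω in F, X ω ∂μ :=
    integral_inter_add_diff hAm hXint.integrableOn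
  rw [Set.inter_comm] at hsplitF
  rw [← hsplitA, ← hsplitF]
  have : q * (μ (A \ F)).toReal = q * (μ (F \ A)).toReal := by rw [hdiff]
  linarith

/-- If `X`, `Y`, `X+Y` are integrable with `P(W ≤ Q_α(W)) = α` for `W ∈ {X, Y, X+Y}`, then
`E[X+Y | X+Y ≤ Q_α(X+Y)] ≥ E[X | X ≤ Q_α(X)] + E[Y | Y ≤ Q_α(Y)]`. -/
theorem stmt19 {Ω : Type*} [MeasurableSpace Ω] (μ : Measure Ω) [IsProbabilityMeasure μ]
    (α : ℝ) (hα : α ∈ Set.Ioo (0 : ℝ) 1)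
    (X Y : Ω → ℝ) (hXm : Measurable X) (hYm : Measurable Y)
    (hXint : Integrable X μ) (hYint : Integrable Y μ)
    (hqX : (μ {ω | X ω ≤ quantile μ α X}).toReal = α)
    (hqY : (μ {ω | Y ω ≤ quantile μ α Y}).toReal = α)
    (hqXY : (μ {ω | X ω + Y ω ≤ quantile μ α (X + Y)}).toReal = α) :
    condExpEvent μ X {ω | X ω ≤ quantile μ α X}
        + condExpEvent μ Y {ω | Y ω ≤ quantile μ α Y}
      ≤ condExpEvent μ (X + Y) {ω | X ω + Y ω ≤ quantile μ α (X + Y)} := by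
  obtain ⟨hα0, hα1⟩ := hα
  set qX := quantile μ α X
  set qY := quantile μ α Y
  set qS := quantile μ α (X + Y)
  set AX : Set Ω := {ω | X ω ≤ qX} with hAX
  set AY : Set Ω := {ω | Y ω ≤ qY} with hAY
  set S : Set Ω := {ω | X ω + Y ω ≤ qS} with hS
  have hSm : MeasurableSet S := measurableSet_le (hXm.add hYm) measurable_const
  have hμX : μ S = μ AX := by
    apply (ENNReal.toReal_eq_toReal_iff' (measure_ne_top μ _) (measure_ne_top μ _)).1
    rw [hqXY, hqX]
  have hμY : μ S = μ AY := by
    apply (ENNReal.toReal_eq_toReal_iff' (measure_ne_top μ _) (measure_ne_top μ _)).1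
    rw [hqXY, hqY]
  have hX : ∫ ω in AX, X ω ∂μ ≤ ∫ ω in S, X ω ∂μ :=
    key_lemma μ X hXm hXint qX S hSm hμX
  have hY : ∫ ω in AY, Y ω ∂μ ≤ ∫ ω in S, Y ω ∂μ :=
    key_lemma μ Y hYm hYint qY S hSm hμY
  have hadd : ∫ ω in S, (X + Y) ω ∂μ = ∫ ω in S, X ω ∂μ + ∫ ω in S, Y ω ∂μ := by
    simp only [Pi.add_apply]
    exact integral_add hXint.integrableOn hYint.integrableOn
  unfold condExpEvent
  rw [hqX, hqY, hqXY, hadd, ← add_div]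
  exact (div_le_div_iff_of_pos_right hα0).mpr (by linarith)
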